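/- There is a bijection between 132-avoiding permutations in S_n and Young diagrams that fit inside the staircase shape (n−1, n−2, ..., 1), given by sending σ to its diagram (the union over all i of the cells weakly south-east dominated by (i, σ(i)) in the n×n array). -/

import Mathlib

/-- `σ` avoids the pattern 321, i.e. there is no decreasing subsequence of length 3. -/
def Avoids321 {n : ℕ} (σ : Equiv.Perm (Fin n)) : Prop :=
  ¬ ∃ i j k : Fin n, i < j ∧ j < k ∧ σ k < σ j ∧ σ j < σ i

/-- `σ` avoids the pattern 132. -/
def Avoids132 {n : ℕ} (σ : Equiv.Perm (Fin n)) : Prop :=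
  ¬ ∃ i j k : Fin n, i < j ∧ j < k ∧ σ i < σ k ∧ σ k < σ j

/-- The number of fixed points of `σ`. -/
def fp {n : ℕ} (σ : Equiv.Perm (Fin n)) : ℕ :=
  (Finset.univ.filter fun i => σ i = i).card

/-- The number of excedances of `σ`. -/
def exc {n : ℕ} (σ : Equiv.Perm (Fin n)) : ℕ :=
  (Finset.univ.filter fun i => i < σ i).card

/-- The length of the longest increasing subsequence of `σ`. -/
noncomputable def lis {n : ℕ} (σ : Equiv.Perm (Fin n)) : ℕ :=
  sSup {k | ∃ f : Fin k → Fin n, StrictMono f ∧ StrictMono (σ ∘ f)}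

/-- The rank of `σ` : the largest `k` such that (in one-line, 0-indexed notation)
`σ i ≥ k` for all `i < k`. -/
noncomputable def rk {n : ℕ} (σ : Equiv.Perm (Fin n)) : ℕ :=
  sSup {k | ∀ i : Fin n, (i : ℕ) < k → k ≤ (σ i : ℕ)}

namespace Stmt8Aux

/-- Greedy lemma: in a 132-avoiding permutation, a non-left-to-right-minimum entry is
the smallest unused value above the running minimum. -/
lemma greedy {n : ℕ} (σ : Equiv.Perm (Fin n)) (h132 : Avoids132 σ)
    (r i : Fin n) (hir : i < r)
    (v : Fin n) (hv : σ i < v) (hvr : v < σ r)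
    (hunused : ∀ j : Fin n, j < r → σ j ≠ v) : False := by
  have hσk : σ (σ.symm v) = v := σ.apply_symm_apply v
  have hkr : r < σ.symm v := by
    rcases lt_trichotomy (σ.symm v) r with h | h | h
    · exact absurd hσk (hunused _ h)
    · rw [h] at hσk; rw [hσk] at hvr; exact absurd hvr (lt_irrefl _)
    · exact h
  exact h132 ⟨i, r, σ.symm v, hir, hkr, by rw [hσk]; exact hv, by rw [hσk]; exact hvr⟩

/-- A 132-avoiding permutation is determined by its sequence of running minima
(equivalently, by its diagram). -/
lemma inj_aux {n : ℕ} (σ τ : Equiv.Perm (Fin n)) (hσ : Avoids132 σ) (hτ : Avoids132 τ)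
    (h : ∀ r : Fin n, ∀ c : ℕ,
      (∀ i : Fin n, i ≤ r → c < (σ i : ℕ)) ↔ (∀ i : Fin n, i ≤ r → c < (τ i : ℕ))) :
    σ = τ := by
  have key : ∀ m : ℕ, ∀ r : Fin n, (r : ℕ) = m → σ r = τ r := by
    intro m
    induction m using Nat.strong_induction_on with
    | _ m IH =>
      intro r hr
      have IH' : ∀ j : Fin n, j < r → σ j = τ j := fun j hj =>
        IH (j : ℕ) (by rw [← hr]; exact hj) j rfl
      obtain ⟨i, hi_mem, hi_min⟩ := Finset.exists_min_image (Finset.Iic r)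
        (fun j => σ j) ⟨r, Finset.mem_Iic.mpr le_rfl⟩
      obtain ⟨i', hi'_mem, hi'_min⟩ := Finset.exists_min_image (Finset.Iic r)
        (fun j => τ j) ⟨r, Finset.mem_Iic.mpr le_rfl⟩
      have hi_le : i ≤ r := Finset.mem_Iic.mp hi_mem
      have hi'_le : i' ≤ r := Finset.mem_Iic.mp hi'_mem
      -- the running minima agree
      have hmineq : σ i = τ i' := by
        by_contra hne
        rcases lt_or_gt_of_ne hne with hlt | hgt
        · have hall : ∀ j : Fin n, j ≤ r → ((σ i : Fin n) : ℕ) < (τ j : ℕ) := fun j hj =>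
            lt_of_lt_of_le (Fin.lt_def.mp hlt)
              (Fin.le_def.mp (hi'_min j (Finset.mem_Iic.mpr hj)))
          have := (h r (σ i)).mpr hall i hi_le
          exact lt_irrefl _ this
        · have hall : ∀ j : Fin n, j ≤ r → ((τ i' : Fin n) : ℕ) < (σ j : ℕ) := fun j hj =>
            lt_of_lt_of_le (Fin.lt_def.mp hgt)
              (Fin.le_def.mp (hi_min j (Finset.mem_Iic.mpr hj)))
          have := (h r (τ i')).mp hall i' hi'_le
          exact lt_irrefl _ this
      by_cases hc : σ r = σ i
      · -- σ r is the running minimum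
        have hir' : i' = r := by
          by_contra hne
          have hlt : i' < r := lt_of_le_of_ne hi'_le hne
          have h1 : σ i' = τ i' := IH' i' hlt
          have h2 : σ i' = σ r := by rw [h1, ← hmineq, hc]
          exact hne (σ.injective h2)
        rw [hc, hmineq, hir']
      · -- σ r is not the running minimum
        have hil : i < r := by
          rcases lt_or_eq_of_le hi_le with h' | h'
          · exact h'
          · exact absurd (by rw [h'] : σ i = σ r) (fun he => hc he.symm)
        have hσr : σ i < σ r := lt_of_le_of_ne (hi_min r (Finset.mem_Iic.mpr le_rfl))
          (fun he => hc he.symm)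
        have hi'l : i' < r := by
          rcases lt_or_eq_of_le hi'_le with h' | h'
          · exact h'
          · exfalso
            have h1 : τ r = σ i := by rw [← h', ← hmineq]
            have h2 : τ i = σ i := (IH' i hil).symm
            have := τ.injective (h1.trans h2.symm)
            rw [this] at hil; exact lt_irrefl _ hil
        have hτr : τ i' < τ r := by
          rcases lt_or_eq_of_le (hi'_min r (Finset.mem_Iic.mpr le_rfl)) with h' | h'
          · exact h'
          · exfalso
            have h1 : τ r = σ i := by rw [← h', ← hmineq]
            have h2 : τ i = σ i := (IH' i hil).symm
            have := τ.injective (h1.trans h2.symm)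
            rw [this] at hil; exact lt_irrefl _ hil
        -- greedy in both directions
        have h1 : ¬ (τ r < σ r) := by
          intro hlt
          refine greedy σ hσ r i hil (τ r) ?_ hlt ?_
          · exact lt_of_le_of_lt (le_of_eq hmineq) hτr
          · intro j hj he
            have := τ.injective ((IH' j hj).symm.trans he)
            rw [this] at hj; exact lt_irrefl _ hj
        have h2 : ¬ (σ r < τ r) := by
          intro hlt
          refine greedy τ hτ r i' hi'l (σ r) ?_ hlt ?_
          · exact lt_of_le_of_lt (le_of_eq hmineq.symm) hσr
          · intro j hj he
            have := σ.injective ((IH' j hj).trans he)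
            rw [this] at hj; exact lt_irrefl _ hj
        exact le_antisymm (not_lt.mp h1) (not_lt.mp h2)
  exact Equiv.ext (fun r => key (r : ℕ) r rfl)

/-- The inverse construction: from the (weakly decreasing) row lengths `lam`,
build the one-line notation of a permutation. -/
noncomputable def fc (lam : ℕ → ℕ) : ℕ → ℕ
  | r =>
    if r = 0 ∨ lam r < lam (r - 1) then lam r
    else sInf {v | lam r < v ∧ ∀ j, j < r → fc lam j ≠ v}
termination_by r => r
decreasing_by exact ‹_›

lemma fc_spec (n : ℕ) (lam : ℕ → ℕ)
    (hanti : ∀ r s : ℕ, r ≤ s → lam s ≤ lam r)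
    (hbd : ∀ r c : ℕ, c < lam r → r + c + 1 < n) :
    ∀ r, r < n →
      (fc lam r < n) ∧ (lam r ≤ fc lam r) ∧
      (∀ j, j < r → fc lam j ≠ fc lam r) ∧
      (∃ j, j ≤ r ∧ fc lam j = lam r) := by
  intro r
  induction r using Nat.strong_induction_on with
  | _ r IH =>
    intro hrn
    have hrl : r + lam r < n := by
      rcases Nat.eq_zero_or_pos (lam r) with h0 | h0
      · omega
      · have := hbd r (lam r - 1) (by omega); omega
    by_cases hdrop : r = 0 ∨ lam r < lam (r - 1)
    · have hfr : fc lam r = lam r := by rw [fc]; rw [if_pos hdrop]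
      refine ⟨by omega, le_of_eq hfr.symm, ?_, ⟨r, le_rfl, hfr⟩⟩
      intro j hj
      rcases hdrop with h0 | hstep
      · exact absurd hj (by omega)
      · have h1 : lam (r - 1) ≤ lam j := hanti j (r - 1) (by omega)
        have h2 : lam j ≤ fc lam j := (IH j hj (by omega)).2.1
        rw [hfr]; omega
    · have hr0 : r ≠ 0 := fun h => hdrop (Or.inl h)
      have heq : lam r = lam (r - 1) := by
        have h1 : lam r ≤ lam (r - 1) := hanti (r - 1) r (by omega)
        have h2 : ¬ lam r < lam (r - 1) := fun h => hdrop (Or.inr h)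
        omega
      obtain ⟨j0, hj0le, hj0⟩ := (IH (r - 1) (by omega) (by omega)).2.2.2
      have hj0' : fc lam j0 = lam r := by rw [hj0, heq]
      have hfr : fc lam r = sInf {v | lam r < v ∧ ∀ j, j < r → fc lam j ≠ v} := by
        rw [fc]; rw [if_neg hdrop]
      classical
      set U : Finset ℕ := (Finset.range r).image (fc lam) with hU
      have hlamU : lam r ∈ U := Finset.mem_image.mpr
        ⟨j0, Finset.mem_range.mpr (by omega), hj0'⟩
      have hcard : (U ∪ Finset.range (lam r + 1)).card ≤ r + lam r := by
        have h1 := Finset.card_union_add_card_inter U (Finset.range (lam r + 1))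
        have h2 : U.card ≤ r := le_trans Finset.card_image_le (by simp)
        have h3 : 0 < (U ∩ Finset.range (lam r + 1)).card := Finset.card_pos.mpr
          ⟨lam r, Finset.mem_inter.mpr ⟨hlamU, Finset.mem_range.mpr (by omega)⟩⟩
        have h4 : (Finset.range (lam r + 1)).card = lam r + 1 := Finset.card_range _
        omega
      have hex : ∃ v, v ∈ Finset.range n ∧ v ∉ U ∪ Finset.range (lam r + 1) := by
        by_contra hcon
        push_neg at hcon
        have hsub : Finset.range n ⊆ U ∪ Finset.range (lam r + 1) :=
          fun x hx => hcon x hx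
        have := Finset.card_le_card hsub
        rw [Finset.card_range] at this
        omega
      obtain ⟨v, hvn, hvF⟩ := hex
      rw [Finset.mem_union, not_or] at hvF
      have hvU : ∀ j, j < r → fc lam j ≠ v := by
        intro j hj he
        exact hvF.1 (Finset.mem_image.mpr ⟨j, Finset.mem_range.mpr hj, he⟩)
      have hvgt : lam r < v := by
        have := hvF.2; rw [Finset.mem_range] at this; omega
      have hvT : v ∈ {v | lam r < v ∧ ∀ j, j < r → fc lam j ≠ v} := ⟨hvgt, hvU⟩
      have hmem : sInf {v | lam r < v ∧ ∀ j, j < r → fc lam j ≠ v} ∈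
          {v | lam r < v ∧ ∀ j, j < r → fc lam j ≠ v} := Nat.sInf_mem ⟨v, hvT⟩
      have hsle : sInf {v | lam r < v ∧ ∀ j, j < r → fc lam j ≠ v} ≤ v := Nat.sInf_le hvT
      rw [Finset.mem_range] at hvn
      refine ⟨by rw [hfr]; omega, by rw [hfr]; exact le_of_lt hmem.1, ?_, ⟨j0, by omega, hj0'⟩⟩
      intro j hj he
      rw [hfr] at he
      exact hmem.2 j hj he

lemma surj_aux (n : ℕ) (S : Set (ℕ × ℕ))
    (hS1 : ∀ p ∈ S, p.1 + p.2 + 1 < n)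
    (hS2 : ∀ p ∈ S, ∀ q : ℕ × ℕ, q.1 ≤ p.1 → q.2 ≤ p.2 → q ∈ S) :
    ∃ σ : Equiv.Perm (Fin n), Avoids132 σ ∧
      {p : ℕ × ℕ | p.1 < n ∧ ∀ i : Fin n, (i : ℕ) ≤ p.1 → p.2 < (σ i : ℕ)} = S := by
  classical
  set lam : ℕ → ℕ := fun r => sInf {c | (r, c) ∉ S} with hlam
  have hmem : ∀ r c : ℕ, (r, c) ∈ S ↔ c < lam r := by
    intro r c
    constructor
    · intro hc
      by_contra hle
      push_neg at hle
      have hne : {c | (r, c) ∉ S}.Nonempty := by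
        refine ⟨n, fun hn => ?_⟩
        have := hS1 _ hn
        simp only at this
        omega
      have hmem2 : (r, lam r) ∉ S := Nat.sInf_mem hne
      exact hmem2 (hS2 _ hc (r, lam r) le_rfl hle)
    · intro hc
      by_contra hns
      have : lam r ≤ c := Nat.sInf_le hns
      omega
  have hanti : ∀ r s : ℕ, r ≤ s → lam s ≤ lam r := by
    intro r s hrs
    by_contra hcon
    push_neg at hcon
    have h1 : (s, lam r) ∈ S := (hmem s (lam r)).mpr hcon
    have h2 : (r, lam r) ∈ S := hS2 _ h1 (r, lam r) hrs le_rfl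
    have := (hmem r (lam r)).mp h2
    omega
  have hbd : ∀ r c : ℕ, c < lam r → r + c + 1 < n := by
    intro r c hc
    have := hS1 _ ((hmem r c).mpr hc)
    simpa using this
  have spec := fc_spec n lam hanti hbd
  have hg : ∀ i : Fin n, fc lam (i : ℕ) < n := fun i => (spec (i : ℕ) i.isLt).1
  have hginj : Function.Injective (fun i : Fin n => (⟨fc lam (i : ℕ), hg i⟩ : Fin n)) := by
    intro a b hab
    by_contra hne
    have hval : fc lam (a : ℕ) = fc lam (b : ℕ) := by
      simpa [Fin.ext_iff] using hab
    rcases Ne.lt_or_gt hne with h | h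
    · exact (spec (b : ℕ) b.isLt).2.2.1 (a : ℕ) h hval
    · exact (spec (a : ℕ) a.isLt).2.2.1 (b : ℕ) h hval.symm
  set σ : Equiv.Perm (Fin n) :=
    Equiv.ofBijective _ (Finite.injective_iff_bijective.mp hginj) with hσdef
  have hσapp : ∀ i : Fin n, (σ i : ℕ) = fc lam (i : ℕ) := fun i => rfl
  have h132 : Avoids132 σ := by
    rintro ⟨i, j, k, hij, hjk, h1, h2⟩
    have hij' : (i : ℕ) < (j : ℕ) := Fin.lt_def.mp hij
    have hjk' : (j : ℕ) < (k : ℕ) := Fin.lt_def.mp hjk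
    have h1' : fc lam (i : ℕ) < fc lam (k : ℕ) := by
      rw [← hσapp, ← hσapp]; exact Fin.lt_def.mp h1
    have h2' : fc lam (k : ℕ) < fc lam (j : ℕ) := by
      rw [← hσapp, ← hσapp]; exact Fin.lt_def.mp h2
    have hji : lam (j : ℕ) ≤ lam (i : ℕ) := hanti _ _ (le_of_lt hij')
    have hfi : lam (i : ℕ) ≤ fc lam (i : ℕ) := (spec (i : ℕ) i.isLt).2.1
    have hnd : ¬ ((j : ℕ) = 0 ∨ lam (j : ℕ) < lam ((j : ℕ) - 1)) := by
      intro hd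
      have : fc lam (j : ℕ) = lam (j : ℕ) := by rw [fc]; rw [if_pos hd]
      omega
    have hfj : fc lam (j : ℕ) =
        sInf {v | lam (j : ℕ) < v ∧ ∀ t, t < (j : ℕ) → fc lam t ≠ v} := by
      rw [fc]; rw [if_neg hnd]
    have hkT : fc lam (k : ℕ) ∈
        {v | lam (j : ℕ) < v ∧ ∀ t, t < (j : ℕ) → fc lam t ≠ v} := by
      refine ⟨by omega, fun t ht he => ?_⟩
      exact (spec (k : ℕ) k.isLt).2.2.1 t (lt_trans ht hjk') he
    have := Nat.sInf_le hkT
    rw [← hfj] at this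
    omega
  refine ⟨σ, h132, ?_⟩
  ext ⟨r, c⟩
  simp only [Set.mem_setOf_eq]
  rw [hmem r c]
  constructor
  · rintro ⟨hrn, hall⟩
    obtain ⟨j, hjr, hjv⟩ := (spec r hrn).2.2.2
    have hjn : j < n := by omega
    have := hall ⟨j, hjn⟩ (by simpa using hjr)
    rw [hσapp] at this
    simp only at this
    omega
  · intro hc
    have hrn : r < n := by have := hbd r c hc; omega
    refine ⟨hrn, fun i hi => ?_⟩
    have h1 : lam r ≤ lam (i : ℕ) := hanti _ _ hi
    have h2 : lam (i : ℕ) ≤ fc lam (i : ℕ) := (spec (i : ℕ) i.isLt).2.1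
    rw [hσapp]
    omega

end Stmt8Aux

/-- Sending a 132-avoiding permutation `σ` to its diagram (in the `n × n` array,
0-indexed, the set of cells `(r, c)` not weakly south-east of any point `(i, σ i)`)
is a bijection onto the Young diagrams fitting inside the staircase
`(n-1, n-2, …, 1)`. -/
theorem stmt8 (n : ℕ) :
    Set.BijOn
      (fun σ : Equiv.Perm (Fin n) =>
        {p : ℕ × ℕ | p.1 < n ∧ ∀ i : Fin n, (i : ℕ) ≤ p.1 → p.2 < (σ i : ℕ)})
      {σ | Avoids132 σ}
      {S : Set (ℕ × ℕ) |
        (∀ p ∈ S, p.1 + p.2 + 1 < n) ∧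
        (∀ p ∈ S, ∀ q : ℕ × ℕ, q.1 ≤ p.1 → q.2 ≤ p.2 → q ∈ S)} := by
  classical
  refine ⟨?_, ?_, ?_⟩
  · -- MapsTo
    intro σ _
    constructor
    · rintro ⟨r, c⟩ hp
      obtain ⟨hrn, hall⟩ := hp
      simp only at hrn hall ⊢
      -- counting argument: the r+1 values σ 0, …, σ r are distinct and all in (c, n)
      have key : (Finset.range (r + 1)).card ≤ (Finset.Ico (c + 1) n).card := by
        refine Finset.card_le_card_of_injOn
          (fun j => if h : j < n then (σ ⟨j, h⟩ : ℕ) else 0) ?_ ?_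
        · intro a ha
          rw [Finset.mem_coe, Finset.mem_range] at ha
          have han : a < n := by omega
          simp only [dif_pos han, Finset.mem_coe, Finset.mem_Ico]
          have := hall ⟨a, han⟩ (by simpa using Nat.lt_succ_iff.mp ha)
          exact ⟨by omega, (σ _).isLt⟩
        · intro a ha b hb hab
          simp only [Finset.coe_range, Set.mem_Iio] at ha hb
          have han : a < n := by omega
          have hbn : b < n := by omega
          simp only [dif_pos han, dif_pos hbn] at hab
          have := σ.injective (Fin.ext hab)
          simpa [Fin.ext_iff] using this
      rw [Finset.card_range, Nat.card_Ico] at key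
      omega
    · rintro ⟨r, c⟩ hp ⟨r', c'⟩ hr' hc'
      obtain ⟨hrn, hall⟩ := hp
      simp only at hr' hc' hrn hall ⊢
      exact ⟨lt_of_le_of_lt hr' hrn,
        fun i hi => lt_of_le_of_lt hc' (hall i (le_trans hi hr'))⟩
  · -- InjOn
    intro σ hσ τ hτ hD
    refine Stmt8Aux.inj_aux σ τ hσ hτ ?_
    intro r c
    have := Set.ext_iff.mp hD ((r : ℕ), c)
    simp only [Set.mem_setOf_eq] at this
    constructor
    · intro hs
      have h1 : ((r : ℕ) < n ∧ ∀ i : Fin n, (i : ℕ) ≤ (r : ℕ) → c < (σ i : ℕ)) :=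
        ⟨r.isLt, fun i hi => hs i (Fin.le_def.mpr hi)⟩
      exact fun i hi => (this.mp h1).2 i (Fin.le_def.mp hi)
    · intro hs
      have h1 : ((r : ℕ) < n ∧ ∀ i : Fin n, (i : ℕ) ≤ (r : ℕ) → c < (τ i : ℕ)) :=
        ⟨r.isLt, fun i hi => hs i (Fin.le_def.mpr hi)⟩
      exact fun i hi => (this.mpr h1).2 i (Fin.le_def.mp hi)
  · -- SurjOn
    intro S hS
    obtain ⟨σ, h132, hDσ⟩ := Stmt8Aux.surj_aux n S hS.1 hS.2
    exact ⟨σ, h132, hDσ⟩
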